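/- Let L > 0 and B > 0 with L² ≤ B, let (v_n)_{n≥0} be nonnegative reals, (δ_n)_{n≥0} a sequence with δ_n ∈ {0,1}, (S_n)_{n≥0} real numbers, and e₀ ≥ 0. For any real sequence γ̃ = (γ̃_n)_{n≥0}, define the error sequence (e_{γ̃}^n)_{n≥0} by e_{γ̃}^0 = e₀ and e_{γ̃}^{n+1} = δ_n[(1 − 2Lγ̃_n + Bγ̃_n²) e_{γ̃}^n + B(2+v_n)γ̃_n² + S_n] + (1−δ_n) e_{γ̃}^n. Let γ = (γ_n)_{n≥0} be the greedy sequence defined along its own trajectory by γ_n = L e_{γ}^n / (B(e_{γ}^n + 2 + v_n)). Assume that e_{γ}^n ≥ 0 for all n. Then for every real sequence γ̃ such that e_{γ̃}^n ≥ 0 for all n, one has e_{γ}^n ≤ e_{γ̃}^n for all n ≥ 0. -/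
import Mathlib


/-- The error sequence of the dynamic learning-rate model:
`e⁰ = e₀` and
`e^{n+1} = δ_n [(1 − 2Lγ_n + Bγ_n²) eⁿ + B(2+v_n)γ_n² + S_n] + (1 − δ_n) eⁿ`. -/
noncomputable def errSeq (L B : ℝ) (v S δ : ℕ → ℝ) (e0 : ℝ) (γ : ℕ → ℝ) : ℕ → ℝ
  | 0 => e0
  | n + 1 =>
      δ n * ((1 - 2 * L * γ n + B * (γ n) ^ 2) * errSeq L B v S δ e0 γ n
              + B * (2 + v n) * (γ n) ^ 2 + S n)
        + (1 - δ n) * errSeq L B v S δ e0 γ n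

lemma greedy_step_key (L B vn e e' g' : ℝ) (hL : 0 < L) (hB : 0 < B)
    (hLB : L ^ 2 ≤ B) (hv : 0 ≤ vn) (he : 0 ≤ e) (hee : e ≤ e') :
    (1 - 2 * L * (L * e / (B * (e + 2 + vn))) + B * (L * e / (B * (e + 2 + vn))) ^ 2) * e
        + B * (2 + vn) * (L * e / (B * (e + 2 + vn))) ^ 2
      ≤ (1 - 2 * L * g' + B * g' ^ 2) * e' + B * (2 + vn) * g' ^ 2 := by
  set g : ℝ := L * e / (B * (e + 2 + vn)) with hgdef
  have hA : 0 < B * (e + 2 + vn) := by positivity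
  have hAg : B * (e + 2 + vn) * g = L * e := by
    rw [hgdef]; field_simp
  have hmono : (1 - 2 * L * g' + B * g' ^ 2) * e + B * (2 + vn) * g' ^ 2
      ≤ (1 - 2 * L * g' + B * g' ^ 2) * e' + B * (2 + vn) * g' ^ 2 := by
    have hq : 0 ≤ 1 - 2 * L * g' + B * g' ^ 2 := by
      nlinarith [sq_nonneg (1 - L * g'), sq_nonneg g']
    nlinarith
  have hopt : (1 - 2 * L * g + B * g ^ 2) * e + B * (2 + vn) * g ^ 2
      ≤ (1 - 2 * L * g' + B * g' ^ 2) * e + B * (2 + vn) * g' ^ 2 := by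
    have h1 : B * (e + 2 + vn) * g * g' = L * e * g' := by rw [hAg]
    have h2 : B * (e + 2 + vn) * g * g = L * e * g := by rw [hAg]
    nlinarith [mul_nonneg hA.le (sq_nonneg (g' - g)), h1, h2]
  linarith

theorem greedy_learning_rate_optimal (L B : ℝ) (hL : 0 < L) (hB : 0 < B)
    (hLB : L ^ 2 ≤ B) (v : ℕ → ℝ) (hv : ∀ n, 0 ≤ v n)
    (δ : ℕ → ℝ) (hδ : ∀ n, δ n = 0 ∨ δ n = 1)
    (S : ℕ → ℝ) (e0 : ℝ) (he0 : 0 ≤ e0)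
    (γ : ℕ → ℝ)
    (hγ : ∀ n, γ n = L * errSeq L B v S δ e0 γ n
      / (B * (errSeq L B v S δ e0 γ n + 2 + v n)))
    (hγnonneg : ∀ n, 0 ≤ errSeq L B v S δ e0 γ n)
    (γ' : ℕ → ℝ) (hγ'nonneg : ∀ n, 0 ≤ errSeq L B v S δ e0 γ' n) :
    ∀ n, errSeq L B v S δ e0 γ n ≤ errSeq L B v S δ e0 γ' n := by
  intro n
  induction n with
  | zero => simp [errSeq]
  | succ n ih =>
    have he := hγnonneg n
    have key := greedy_step_key L B (v n) (errSeq L B v S δ e0 γ n)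
      (errSeq L B v S δ e0 γ' n) (γ' n) hL hB hLB (hv n) he ih
    rw [← hγ n] at key
    show δ n * ((1 - 2 * L * γ n + B * (γ n) ^ 2) * errSeq L B v S δ e0 γ n
              + B * (2 + v n) * (γ n) ^ 2 + S n)
        + (1 - δ n) * errSeq L B v S δ e0 γ n
      ≤ δ n * ((1 - 2 * L * γ' n + B * (γ' n) ^ 2) * errSeq L B v S δ e0 γ' n
              + B * (2 + v n) * (γ' n) ^ 2 + S n)
        + (1 - δ n) * errSeq L B v S δ e0 γ' n
    rcases hδ n with h | h <;> simp [h] <;> linarith
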